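/- arXiv:1802.05315 — 2 statements merged into one kernel-verified Lean document; each statement's English description precedes it below -/
import Mathlib

section
/- Any interval I = [a, b] ⊆ [1, T] of natural numbers can be partitioned into a finite sequence of disjoint consecutive dyadic intervals I^{−m}, …, I^0, I^1, …, I^h ∈ 𝓘 such that |I^{−i}|/|I^{−i+1}| ≤ 1/2 for all i ≥ 1 and |I^i|/|I^{i−1}| ≤ 1/2 for all i ≥ 2 (Geometric Covering theorem). -/
/-- Dyadic interval of length `2^n` starting at `i * 2^n`, as a set of naturals. -/
def dyadic (n i : ℕ) : Set ℕ := Set.Icc (i * 2 ^ n) ((i + 1) * 2 ^ n - 1)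

private def v2 (n : ℕ) : ℕ := padicValNat 2 n

private lemma v2_dvd (n : ℕ) : 2 ^ v2 n ∣ n := pow_padicValNat_dvd

private lemma v2_le_of_dvd {k n : ℕ} (hn : n ≠ 0) (h : 2 ^ k ∣ n) : k ≤ v2 n :=
  (padicValNat_dvd_iff_le hn).mp h

private lemma v2_succ_not_dvd {n : ℕ} (hn : n ≠ 0) : ¬ 2 ^ (v2 n + 1) ∣ n :=
  pow_succ_padicValNat_not_dvd hn

private lemma step_dvd' {s k : ℕ} (h1 : 2 ^ k ∣ s) (h2 : ¬ 2 ^ (k + 1) ∣ s) :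
    2 ^ (k + 1) ∣ s + 2 ^ k := by
  obtain ⟨m, hm⟩ := h1
  have hm2 : ¬ 2 ∣ m := by
    rintro ⟨r, rfl⟩
    exact h2 ⟨r, by rw [hm]; ring⟩
  obtain ⟨r, hr⟩ : 2 ∣ m + 1 := by omega
  refine ⟨r, ?_⟩
  have h3 : s + 2 ^ k = 2 ^ k * (m + 1) := by rw [hm]; ring
  rw [h3, hr]; ring

private lemma step_dvd {s : ℕ} (hs : s ≠ 0) : 2 ^ (v2 s + 1) ∣ s + 2 ^ v2 s :=
  step_dvd' (v2_dvd s) (v2_succ_not_dvd hs)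

private lemma v2_step_lt {s : ℕ} (hs : s ≠ 0) : v2 s + 1 ≤ v2 (s + 2 ^ v2 s) :=
  v2_le_of_dvd (by positivity) (step_dvd hs)

/-- chain of dyadic blocks covering `[s, s+d)` with starts `st`. -/
private def IsCh (s d A : ℕ) (nn ii st : ℕ → ℕ) : Prop :=
  st 0 = s ∧ st A = s + d ∧ ∀ j, j < A → ii j * 2 ^ nn j = st j ∧ st (j + 1) = st j + 2 ^ nn j

private def fcons (x : ℕ) (f : ℕ → ℕ) : ℕ → ℕ := fun j => if j = 0 then x else f (j - 1)

@[simp] private lemma fcons_zero (x f) : fcons x f 0 = x := rfl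
@[simp] private lemma fcons_succ (x f) (j : ℕ) : fcons x f (j + 1) = f j := rfl

private lemma asc : ∀ d s, 1 ≤ s → (∀ t, s ≤ t → t ≤ s + d → 2 ^ v2 t ∣ s + d) →
    ∃ A nn ii st, IsCh s d A nn ii st ∧
      (∀ j, j + 1 < A → 2 * 2 ^ nn j ≤ 2 ^ nn (j + 1)) ∧
      (1 ≤ A → nn 0 = v2 s) := by
  intro d
  induction d using Nat.strong_induction_on with
  | _ d IH =>
    intro s hs hU
    rcases Nat.eq_zero_or_pos d with rfl | hd
    · exact ⟨0, fun _ => 0, fun _ => 0, fun _ => s, ⟨rfl, rfl, by omega⟩, by omega, by omega⟩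
    · have hks : 2 ^ v2 s ∣ s := v2_dvd s
      have hkd : (2 : ℕ) ^ v2 s ∣ s + d := hU s le_rfl (by omega)
      have hkd' : (2 : ℕ) ^ v2 s ∣ d := by
        have := Nat.dvd_sub hkd hks
        simpa using this
      have hk1 : 1 ≤ 2 ^ v2 s := Nat.one_le_two_pow
      have hkle : 2 ^ v2 s ≤ d := Nat.le_of_dvd hd hkd'
      have key : s + 2 ^ v2 s + (d - 2 ^ v2 s) = s + d := by omega
      obtain ⟨A', nn', ii', st', hC', hD', hH'⟩ :=
        IH (d - 2 ^ v2 s) (by omega) (s + 2 ^ v2 s) (by omega)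
          (fun t ht1 ht2 => by rw [key]; exact hU t (by omega) (by omega))
      refine ⟨A' + 1, fcons (v2 s) nn', fcons (s / 2 ^ v2 s) ii', fcons s st', ⟨rfl, ?_, ?_⟩, ?_, ?_⟩
      · show st' A' = s + d
        rw [hC'.2.1]; omega
      · intro j hj
        cases j with
        | zero =>
          refine ⟨Nat.div_mul_cancel hks, ?_⟩
          show st' 0 = s + 2 ^ v2 s
          exact hC'.1
        | succ j' =>
          have := hC'.2.2 j' (by omega)
          simpa using this
      · intro j hj
        cases j with
        | zero =>
          simp only [fcons_zero, fcons_succ]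
          have hA' : 1 ≤ A' := by omega
          rw [hH' hA']
          have h1 : v2 s + 1 ≤ v2 (s + 2 ^ v2 s) := v2_step_lt (by omega)
          calc 2 * 2 ^ v2 s = 2 ^ (v2 s + 1) := by ring
          _ ≤ 2 ^ v2 (s + 2 ^ v2 s) := Nat.pow_le_pow_right (by norm_num) h1
        | succ j' =>
          have := hD' j' (by omega)
          simpa using this
      · intro _; rfl

private lemma desc : ∀ d p, 1 ≤ p → (∀ t, p ≤ t → t ≤ p + d → 2 ^ v2 t ∣ p) →
    ∃ A nn ii st, IsCh p d A nn ii st ∧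
      (∀ j, j + 1 < A → 2 * 2 ^ nn (j + 1) ≤ 2 ^ nn j) ∧
      (1 ≤ A → 2 ^ nn 0 ≤ d) := by
  intro d
  induction d using Nat.strong_induction_on with
  | _ d IH =>
    intro p hp hU
    rcases Nat.eq_zero_or_pos d with rfl | hd
    · exact ⟨0, fun _ => 0, fun _ => 0, fun _ => p, ⟨rfl, rfl, by omega⟩, by omega, by omega⟩
    · -- first: d < 2 ^ v2 p
      have hbig : d < 2 ^ v2 p := by
        by_contra hcon
        push_neg at hcon
        have hpw : 1 ≤ 2 ^ v2 p := Nat.one_le_two_pow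
        have ht := hU (p + 2 ^ v2 p) (by omega) (by omega)
        have h1 : v2 p + 1 ≤ v2 (p + 2 ^ v2 p) := v2_step_lt (by omega)
        have h2 : (2 : ℕ) ^ (v2 p + 1) ∣ p :=
          dvd_trans (pow_dvd_pow 2 h1) ht
        exact v2_succ_not_dvd (by omega) h2
      set k := Nat.log 2 d with hkdef
      have hk1 : 2 ^ k ≤ d := Nat.pow_log_le_self 2 (by omega)
      have hk2 : d < 2 ^ (k + 1) := Nat.lt_pow_succ_log_self (by norm_num) d
      have hkv : k + 1 ≤ v2 p := by
        have : (2 : ℕ) ^ k < 2 ^ v2 p := by omega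
        have := (Nat.pow_lt_pow_iff_right (a := 2) (by norm_num)).mp this
        omega
      have hkp : (2 : ℕ) ^ k ∣ p := dvd_trans (pow_dvd_pow 2 (by omega)) (v2_dvd p)
      have hkp1 : (2 : ℕ) ^ (k + 1) ∣ p := dvd_trans (pow_dvd_pow 2 hkv) (v2_dvd p)
      have hpow1 : 1 ≤ 2 ^ k := Nat.one_le_two_pow
      have key : p + 2 ^ k + (d - 2 ^ k) = p + d := by omega
      have hUnew : ∀ t, p + 2 ^ k ≤ t → t ≤ p + 2 ^ k + (d - 2 ^ k) → 2 ^ v2 t ∣ p + 2 ^ k := by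
        intro t ht1 ht2
        rw [key] at ht2
        have hdvp : 2 ^ v2 t ∣ p := hU t (by omega) ht2
        have hvtk : v2 t ≤ k := by
          by_contra hcon
          push_neg at hcon
          have h1 : (2 : ℕ) ^ (k + 1) ∣ t := dvd_trans (pow_dvd_pow 2 hcon) (v2_dvd t)
          have h2 : (2 : ℕ) ^ (k + 1) ∣ t - p := Nat.dvd_sub h1 hkp1
          have h3 : (2 : ℕ) ^ (k + 1) ≤ t - p := Nat.le_of_dvd (by omega) h2
          have h4 : (2 : ℕ) ^ (k + 1) = 2 * 2 ^ k := by ring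
          omega
        exact Nat.dvd_add hdvp (dvd_trans (pow_dvd_pow 2 hvtk) dvd_rfl)
      obtain ⟨A', nn', ii', st', hC', hD', hH'⟩ :=
        IH (d - 2 ^ k) (by omega) (p + 2 ^ k) (by omega) hUnew
      refine ⟨A' + 1, fcons k nn', fcons (p / 2 ^ k) ii', fcons p st', ⟨rfl, ?_, ?_⟩, ?_, ?_⟩
      · show st' A' = p + d
        rw [hC'.2.1]; omega
      · intro j hj
        cases j with
        | zero =>
          refine ⟨Nat.div_mul_cancel hkp, ?_⟩
          show st' 0 = p + 2 ^ k
          exact hC'.1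
        | succ j' =>
          have := hC'.2.2 j' (by omega)
          simpa using this
      · intro j hj
        cases j with
        | zero =>
          simp only [fcons_zero, fcons_succ]
          have hA' : 1 ≤ A' := by omega
          have h1 : 2 ^ nn' 0 ≤ d - 2 ^ k := hH' hA'
          have h2 : 2 ^ nn' 0 < 2 ^ k := by omega
          have h3 : nn' 0 < k := (Nat.pow_lt_pow_iff_right (a := 2) (by norm_num)).mp h2
          calc 2 * 2 ^ nn' 0 = 2 ^ (nn' 0 + 1) := by ring
          _ ≤ 2 ^ k := Nat.pow_le_pow_right (by norm_num) (by omega)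
        | succ j' =>
          have := hD' j' (by omega)
          simpa using this
      · intro _
        simpa using hk1

private lemma stMono {st : ℕ → ℕ} {A : ℕ} (h : ∀ j, j < A → st j ≤ st (j + 1)) :
    ∀ j k, j ≤ k → k ≤ A → st j ≤ st k := by
  intro j k hjk hkA
  induction k with
  | zero =>
    have h0 : j = 0 := by omega
    subst h0; exact le_rfl
  | succ n ih =>
    rcases Nat.lt_or_ge j (n + 1) with hl | hg
    · exact le_trans (ih (by omega) (by omega)) (h n (by omega))
    · have : j = n + 1 := by omega
      subst this; exact le_rfl

private lemma union_Ico (st : ℕ → ℕ) :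
    ∀ A, (∀ j, j < A → st j ≤ st (j + 1)) →
      (⋃ j ∈ Finset.range A, Set.Ico (st j) (st (j + 1)) : Set ℕ) = Set.Ico (st 0) (st A) := by
  intro A
  induction A with
  | zero => simp
  | succ n ih =>
    intro h
    rw [Finset.range_add_one, Finset.set_biUnion_insert _ _ _, ih (fun j hj => h j (by omega)),
      Set.union_comm]
    exact Set.Ico_union_Ico_eq_Ico (stMono h 0 n (by omega) (by omega)) (h n (by omega))

private lemma dyadic_eq {n i a b : ℕ} (h1 : i * 2 ^ n = a) (h2 : a + 2 ^ n = b) :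
    dyadic n i = Set.Ico a b := by
  have hpw : 1 ≤ 2 ^ n := Nat.one_le_two_pow
  have e1 : (i + 1) * 2 ^ n = i * 2 ^ n + 2 ^ n := by ring
  ext x
  simp only [dyadic, Set.mem_Icc, Set.mem_Ico]
  omega

/-- Geometric Covering: any interval `[a,b] ⊆ [1,T]` can be partitioned into
a finite sequence of disjoint, consecutive dyadic intervals
`I^{-m}, …, I^0, I^1, …, I^h ∈ 𝓘` (indexed here by `j = 0, …, m + h`, with pivot `m`),
whose lengths at least double along the first sequence and at least halve along the second
(the halving condition starting from the second interval of the second sequence). -/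
theorem stmt2 (T a b : ℕ) (ha : 1 ≤ a) (hab : a ≤ b) (hbT : b ≤ T) :
    ∃ (m h : ℕ) (nn ii : ℕ → ℕ),
      -- the intervals cover exactly [a,b]
      (⋃ j ∈ Finset.range (m + h + 1), dyadic (nn j) (ii j)) = Set.Icc a b ∧
      -- they are pairwise disjoint
      (∀ j k : ℕ, j < k → k ≤ m + h → Disjoint (dyadic (nn j) (ii j)) (dyadic (nn k) (ii k))) ∧
      -- they are consecutive: each interval starts right after the previous one ends
      (∀ j : ℕ, j < m + h → ii (j + 1) * 2 ^ nn (j + 1) = (ii j + 1) * 2 ^ nn j) ∧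
      -- first sequence I^{-m}, …, I^0: lengths at least double, i.e. |I^{-i}| ≤ |I^{-i+1}|/2
      (∀ j : ℕ, j + 1 ≤ m → 2 * 2 ^ nn j ≤ 2 ^ nn (j + 1)) ∧
      -- second sequence I^1, …, I^h: lengths at least halve from the second one on,
      -- i.e. |I^i| ≤ |I^{i-1}|/2 for i ≥ 2
      (∀ j : ℕ, m + 1 ≤ j → j + 1 ≤ m + h → 2 * 2 ^ nn (j + 1) ≤ 2 ^ nn j) := by
  -- pivot: point of maximal 2-adic valuation in [a, b+1]
  obtain ⟨p, hpmem, hpmax⟩ :=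
    Finset.exists_max_image (Finset.Icc a (b + 1)) (fun t => v2 t)
      ⟨a, Finset.mem_Icc.mpr ⟨le_rfl, by omega⟩⟩
  rw [Finset.mem_Icc] at hpmem
  have hdvd : ∀ t, a ≤ t → t ≤ b + 1 → 2 ^ v2 t ∣ p := by
    intro t ht1 ht2
    have hle := hpmax t (Finset.mem_Icc.mpr ⟨ht1, ht2⟩)
    exact dvd_trans (pow_dvd_pow 2 hle) (v2_dvd p)
  obtain ⟨A1, nn1, ii1, st1, hC1, hD1, _⟩ :=
    asc (p - a) a ha (fun t ht1 ht2 => by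
      have hh : a + (p - a) = p := by omega
      rw [hh]
      exact hdvd t ht1 (by omega))
  obtain ⟨A2, nn2, ii2, st2, hC2, hD2, _⟩ :=
    desc (b + 1 - p) p (by omega) (fun t ht1 ht2 => hdvd t (by omega) (by omega))
  have hp1 : st1 A1 = p := by rw [hC1.2.1]; omega
  have hp2 : st2 A2 = b + 1 := by rw [hC2.2.1]; omega
  -- if A1 = 0 then p = a ; if A2 = 0 then p = b+1
  have hA1z : A1 = 0 → p = a := by
    intro h0
    rw [← hp1, h0, hC1.1]
  have hA2z : A2 = 0 → p = b + 1 := by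
    intro h0
    rw [← hp2, h0, hC2.1]
  have hA : 1 ≤ A1 + A2 := by
    by_contra hcon
    have h1 : A1 = 0 := by omega
    have h2 : A2 = 0 := by omega
    have := hA1z h1
    have := hA2z h2
    omega
  set A := A1 + A2 with hAdef
  set nn : ℕ → ℕ := fun j => if j < A1 then nn1 j else nn2 (j - A1) with hnn
  set ii : ℕ → ℕ := fun j => if j < A1 then ii1 j else ii2 (j - A1) with hii
  set st : ℕ → ℕ := fun j => if j < A1 then st1 j else st2 (j - A1) with hst
  have hst0 : st 0 = a := by
    rcases Nat.eq_zero_or_pos A1 with h0 | h0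
    · have hpa := hA1z h0
      show (if 0 < A1 then st1 0 else st2 (0 - A1)) = a
      rw [if_neg (by omega), Nat.zero_sub, hC2.1, hpa]
    · simp only [hst, if_pos h0]
      exact hC1.1
  have hstA : st A = b + 1 := by
    have hnl : ¬ A < A1 := by omega
    simp only [hst, if_neg hnl, hAdef]
    rw [show A1 + A2 - A1 = A2 from by omega, hp2]
    exact if_neg (by omega)
  have hstep : ∀ j, j < A → ii j * 2 ^ nn j = st j ∧ st (j + 1) = st j + 2 ^ nn j := by
    intro j hj
    by_cases h1 : j < A1
    · obtain ⟨c1, c2⟩ := hC1.2.2 j h1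
      refine ⟨by simp only [hnn, hii, hst, if_pos h1]; exact c1, ?_⟩
      by_cases h2 : j + 1 < A1
      · simp only [hnn, hst, if_pos h1, if_pos h2]
        exact c2
      · have h3 : j + 1 = A1 := by omega
        simp only [hnn, hst, if_pos h1, if_neg h2]
        rw [h3, Nat.sub_self, hC2.1, ← hp1, ← h3]
        exact c2
    · have h1' : A1 ≤ j := le_of_not_gt h1
      have hj2 : j - A1 < A2 := by omega
      obtain ⟨c1, c2⟩ := hC2.2.2 (j - A1) hj2
      have h2 : ¬ j + 1 < A1 := by omega
      have h4 : j + 1 - A1 = (j - A1) + 1 := by omega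
      refine ⟨by simp only [hnn, hii, hst, if_neg h1]; exact c1, ?_⟩
      simp only [hnn, hst, if_neg h1, if_neg h2, h4]
      exact c2
  have hmono : ∀ j, j < A → st j ≤ st (j + 1) := by
    intro j hj
    have h2 := (hstep j hj).2
    have h3 : 1 ≤ 2 ^ nn j := Nat.one_le_two_pow
    omega
  have hdy : ∀ j, j < A → dyadic (nn j) (ii j) = Set.Ico (st j) (st (j + 1)) := by
    intro j hj
    exact dyadic_eq (hstep j hj).1 (hstep j hj).2.symm
  -- choose m, h
  refine ⟨max A1 1 - 1, A - max A1 1, ?_⟩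
  have hmh : (max A1 1 - 1) + (A - max A1 1) + 1 = A := by omega
  refine ⟨nn, ii, ?_, ?_, ?_, ?_, ?_⟩
  · -- union
    rw [hmh]
    have hcong : (⋃ j ∈ Finset.range A, dyadic (nn j) (ii j)) =
        ⋃ j ∈ Finset.range A, Set.Ico (st j) (st (j + 1)) :=
      Set.iUnion₂_congr (fun j hj => hdy j (Finset.mem_range.mp hj))
    rw [hcong, union_Ico st A hmono, hst0, hstA]
    ext x
    simp only [Set.mem_Ico, Set.mem_Icc]
    omega
  · -- disjoint
    intro j k hjk hk
    have hkA : k < A := by omega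
    rw [hdy j (by omega), hdy k hkA]
    have hle : st (j + 1) ≤ st k := stMono hmono (j + 1) k (by omega) (by omega)
    refine Set.disjoint_left.mpr ?_
    intro x hx1 hx2
    simp only [Set.mem_Ico] at hx1 hx2
    omega
  · -- consecutive
    intro j hj
    have hjA : j + 1 < A := by omega
    have e1 := (hstep (j + 1) hjA).1
    have e2 := (hstep j (by omega)).2
    have e3 := (hstep j (by omega)).1
    rw [e1, e2, ← e3]
    ring
  · -- doubling
    intro j hjm
    have h1 : j + 1 < A1 := by omega
    have hd := hD1 j h1
    simp only [hnn]
    rw [if_pos (show j < A1 by omega), if_pos h1]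
    exact hd
  · -- halving
    intro j hj1 hj2
    have hA1j : A1 ≤ j := by omega
    have hj1A : ¬ j < A1 := by omega
    have hj2A : ¬ j + 1 < A1 := by omega
    have hlt : (j - A1) + 1 < A2 := by omega
    have hd := hD2 (j - A1) hlt
    simp only [hnn]
    rw [if_neg hj2A, if_neg hj1A, show j + 1 - A1 = (j - A1) + 1 from by omega]
    exact hd
end

section
/- Consider a two-expert prediction game of length m where rewards r_t(1), r_t(2) ∈ [0,1] are i.i.d. over t with E[r_t(1)] − E[r_t(2)] = Δ > 0. The Follow-The-Leader algorithm, which at time t plays x_t = argmax_k ∑_{s<t} r_s(k) (breaking ties for expert 1), incurs expected pseudo-regret ∑_{t=1}^m Δ·P(x_t = 2) ≤ Δ + Δ·∑_{t=2}^m e^{−(t−1)Δ²/2} ≤ Δ + 2/Δ, which is O(1/Δ) independent of m. -/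
open MeasureTheory ProbabilityTheory

lemma key_integrable {Ω : Type*} [MeasurableSpace Ω] {μ : Measure Ω} [IsProbabilityMeasure μ]
    {f : Ω → ℝ} (hf : Measurable f) {C : ℝ} (h : ∀ ω, |f ω| ≤ C) : Integrable f μ :=
  (integrable_const C).mono' hf.aestronglyMeasurable (ae_of_all _ fun ω => by simpa using h ω)

lemma key_analytic {x : ℝ} (hx : 0 ≤ x) :
    (1 - x)/2 * Real.exp x + (1 + x)/2 * Real.exp (-x) ≤ Real.exp (-(x^2/2)) := by
  set g : ℝ → ℝ := fun y => Real.exp (y^2/2) * ((1 - y)/2 * Real.exp y + (1 + y)/2 * Real.exp (-y))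
    with hgdef
  have hD : ∀ y : ℝ, HasDerivAt g
      (-(y^2/2) * (Real.exp y - Real.exp (-y)) * Real.exp (y^2/2)) y := by
    intro y
    have h1 : HasDerivAt (fun z : ℝ => z^2/2) y y := by
      simpa using (hasDerivAt_pow 2 y).div_const 2
    have hE : HasDerivAt (fun z : ℝ => Real.exp (z^2/2)) (Real.exp (y^2/2) * y) y := h1.exp
    have ha : HasDerivAt (fun z : ℝ => (1 - z)/2) ((-1)/2 : ℝ) y := by
      simpa using ((hasDerivAt_id y).const_sub 1).div_const 2
    have hb : HasDerivAt (fun z : ℝ => (1 + z)/2) ((1/2) : ℝ) y := by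
      simpa using ((hasDerivAt_id y).const_add 1).div_const 2
    have hexp : HasDerivAt Real.exp (Real.exp y) y := Real.hasDerivAt_exp y
    have hexpneg : HasDerivAt (fun z : ℝ => Real.exp (-z)) (Real.exp (-y) * (-1)) y :=
      (hasDerivAt_id y).neg.exp
    have hA : HasDerivAt (fun z : ℝ => (1 - z)/2 * Real.exp z + (1 + z)/2 * Real.exp (-z))
        ((((-1)/2) * Real.exp y + (1 - y)/2 * Real.exp y
          + ((1/2) * Real.exp (-y) + (1 + y)/2 * (Real.exp (-y) * (-1))))) y :=
      (ha.mul hexp).add (hb.mul hexpneg)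
    have := hE.mul hA
    refine HasDerivAt.congr_deriv this ?_
    ring
  have hanti : AntitoneOn g (Set.Ici (0:ℝ)) := by
    apply antitoneOn_of_deriv_nonpos (convex_Ici 0)
    · exact (continuousOn_univ.mpr (by fun_prop)).mono (Set.subset_univ _)
    · intro y _
      exact (hD y).differentiableAt.differentiableWithinAt
    · intro y hy
      rw [interior_Ici] at hy
      rw [(hD y).deriv]
      have hy0 : 0 < y := hy
      have hle : Real.exp (-y) ≤ Real.exp y := Real.exp_le_exp.2 (by linarith)
      have h1 : 0 ≤ (y^2/2) * (Real.exp y - Real.exp (-y)) * Real.exp (y^2/2) := by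
        apply mul_nonneg (mul_nonneg (by positivity) (by linarith)) (Real.exp_pos _).le
      linarith
  have hg0 : g 0 = 1 := by norm_num [hgdef]
  have hgx : g x ≤ 1 := hg0 ▸ hanti (Set.self_mem_Ici) hx hx
  rw [hgdef] at hgx
  have hEpos : (0:ℝ) < Real.exp (x^2/2) := Real.exp_pos _
  simp only [] at hgx
  rw [show Real.exp (-(x^2/2)) = (Real.exp (x^2/2))⁻¹ from Real.exp_neg _, ← one_div,
    le_div_iff₀ hEpos]
  linarith [hgx, mul_comm (Real.exp (x^2/2)) ((1 - x)/2 * Real.exp x + (1 + x)/2 * Real.exp (-x))]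

lemma key_mgf {Ω : Type*} [MeasurableSpace Ω] {μ : Measure Ω} [IsProbabilityMeasure μ]
    {Y : Ω → ℝ} (hm : Measurable Y) (hb : ∀ ω, |Y ω| ≤ 1) {Δ : ℝ} (hΔ : 0 < Δ)
    (hEY : μ[Y] = Δ) : mgf Y μ (-Δ) ≤ Real.exp (-(Δ^2/2)) := by
  set c1 := (Real.exp Δ + Real.exp (-Δ))/2 with hc1
  set c2 := (Real.exp (-Δ) - Real.exp Δ)/2 with hc2
  have hIntY : Integrable Y μ := key_integrable hm hb
  have hIntExp : Integrable (fun ω => Real.exp (-Δ * Y ω)) μ := by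
    refine key_integrable ((hm.const_mul (-Δ)).exp) (C := Real.exp Δ) fun ω => ?_
    rw [abs_of_pos (Real.exp_pos _), Real.exp_le_exp]
    have := abs_le.mp (hb ω)
    nlinarith [this.1, this.2]
  have hptw : ∀ ω, Real.exp (-Δ * Y ω) ≤ c1 + c2 * Y ω := by
    intro ω
    have hy := abs_le.mp (hb ω)
    have ha : (0:ℝ) ≤ (1 - Y ω)/2 := by linarith
    have hb' : (0:ℝ) ≤ (1 + Y ω)/2 := by linarith
    have hab : (1 - Y ω)/2 + (1 + Y ω)/2 = 1 := by ring
    have h := convexOn_exp.2 (Set.mem_univ Δ) (Set.mem_univ (-Δ)) ha hb' hab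
    simp only [smul_eq_mul] at h
    have e1 : -Δ * Y ω = (1 - Y ω)/2 * Δ + (1 + Y ω)/2 * (-Δ) := by ring
    rw [e1]
    exact h.trans_eq (by rw [hc1, hc2]; ring)
  have hmgf : mgf Y μ (-Δ) = ∫ ω, Real.exp (-Δ * Y ω) ∂μ := rfl
  have hle : mgf Y μ (-Δ) ≤ c1 + c2 * Δ := by
    rw [hmgf]
    calc ∫ ω, Real.exp (-Δ * Y ω) ∂μ ≤ ∫ ω, (c1 + c2 * Y ω) ∂μ :=
          integral_mono hIntExp ((integrable_const c1).add (hIntY.const_mul c2)) hptw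
      _ = c1 + c2 * Δ := by
          rw [integral_add (integrable_const c1) (hIntY.const_mul c2), integral_const,
            integral_const_mul, hEY]
          simp
  refine hle.trans ?_
  have := key_analytic hΔ.le
  calc c1 + c2 * Δ = (1 - Δ)/2 * Real.exp Δ + (1 + Δ)/2 * Real.exp (-Δ) := by
        rw [hc1, hc2]; ring
    _ ≤ Real.exp (-(Δ^2/2)) := this


/-- in a two-expert game of length `m` with i.i.d. rewards
`r_t(1), r_t(2) ∈ [0,1]` and `E[r_t(1)] − E[r_t(2)] = Δ > 0`, the Follow-The-Leader
algorithm `x_t = argmax_k ∑_{s<t} r_s(k)` (ties to expert 1) has expected pseudo-regret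
`∑_{t=1}^m Δ·P(x_t = 2) ≤ Δ + Δ·∑_{t=2}^m e^{−(t−1)Δ²/2} ≤ Δ + 2/Δ`. -/
theorem stmt9 {Ω : Type*} [MeasurableSpace Ω] (μ : Measure Ω) [IsProbabilityMeasure μ]
    (m : ℕ) (r1 r2 : ℕ → Ω → ℝ) (Δ : ℝ) (x : ℕ → Ω → ℕ)
    (hmeas1 : ∀ t, Measurable (r1 t)) (hmeas2 : ∀ t, Measurable (r2 t))
    (hbdd1 : ∀ t ω, r1 t ω ∈ Set.Icc (0 : ℝ) 1) (hbdd2 : ∀ t ω, r2 t ω ∈ Set.Icc (0 : ℝ) 1)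
    (hindep : iIndepFun (fun t ω => (r1 t ω, r2 t ω)) μ)
    (hident : ∀ t, IdentDistrib (fun ω => (r1 t ω, r2 t ω)) (fun ω => (r1 0 ω, r2 0 ω)) μ μ)
    (hΔ : 0 < Δ) (hgap : μ[r1 0] - μ[r2 0] = Δ)
    -- FTL: play expert 1 iff its cumulative past reward is at least that of expert 2
    (hx : ∀ t ω, x t ω = if 0 ≤ ∑ s ∈ Finset.Ico 1 t, (r1 s ω - r2 s ω) then 1 else 2) :
    ∑ t ∈ Finset.Icc 1 m, Δ * (μ {ω | x t ω = 2}).toReal ≤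
        Δ + Δ * ∑ t ∈ Finset.Icc 2 m, Real.exp (-((t : ℝ) - 1) * Δ ^ 2 / 2) ∧
      Δ + Δ * ∑ t ∈ Finset.Icc 2 m, Real.exp (-((t : ℝ) - 1) * Δ ^ 2 / 2) ≤ Δ + 2 / Δ := by
  classical
  set Y : ℕ → Ω → ℝ := fun t ω => r1 t ω - r2 t ω with hYdef
  have hYmeas : ∀ t, Measurable (Y t) := fun t => (hmeas1 t).sub (hmeas2 t)
  have hYbdd : ∀ t ω, |Y t ω| ≤ 1 := by
    intro t ω
    have h1 := hbdd1 t ω; have h2 := hbdd2 t ω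
    rw [abs_le]
    constructor
    · simp only [hYdef]; linarith [h1.1, h2.2]
    · simp only [hYdef]; linarith [h1.2, h2.1]
  have hYindep : iIndepFun Y μ :=
    hindep.comp (fun _ p => p.1 - p.2) (fun _ => measurable_fst.sub measurable_snd)
  have hYident : ∀ t, IdentDistrib (Y t) (Y 0) μ μ := fun t =>
    (hident t).comp (measurable_fst.sub measurable_snd)
  have hInt1 : Integrable (r1 0) μ := key_integrable (hmeas1 0) (C := 1) fun ω =>
    abs_le.2 ⟨by linarith [(hbdd1 0 ω).1], (hbdd1 0 ω).2⟩
  have hInt2 : Integrable (r2 0) μ := key_integrable (hmeas2 0) (C := 1) fun ω =>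
    abs_le.2 ⟨by linarith [(hbdd2 0 ω).1], (hbdd2 0 ω).2⟩
  have hEY : μ[Y 0] = Δ := by
    have h := integral_sub hInt1 hInt2
    simp only [hYdef]
    rw [h, hgap]
  set q := Real.exp (-(Δ^2/2)) with hqdef
  have hq0 : 0 < q := Real.exp_pos _
  have hq1 : q < 1 := Real.exp_lt_one_iff.2 (by nlinarith)
  have hmgfY : ∀ s, mgf (Y s) μ (-Δ) ≤ q := by
    intro s
    have heq : mgf (Y s) μ (-Δ) = mgf (Y 0) μ (-Δ) :=
      ((hYident s).comp ((measurable_id.const_mul (-Δ)).exp)).integral_eq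
    rw [heq]
    exact key_mgf (hYmeas 0) (hYbdd 0) hΔ hEY
  have hIntExpY : ∀ i, Integrable (fun ω => Real.exp (-Δ * Y i ω)) μ := by
    intro i
    refine key_integrable ((hYmeas i).const_mul (-Δ)).exp (C := Real.exp Δ) fun ω => ?_
    rw [abs_of_pos (Real.exp_pos _), Real.exp_le_exp]
    have h := abs_le.mp (hYbdd i ω)
    nlinarith [h.1, h.2]
  have hchern : ∀ t, (μ {ω | x t ω = 2}).toReal ≤ q ^ (t-1) := by
    intro t
    have hsub : {ω | x t ω = 2} ⊆ {ω | (∑ s ∈ Finset.Ico 1 t, Y s) ω ≤ 0} := by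
      intro ω hω
      simp only [Set.mem_setOf_eq, hx] at hω ⊢
      rw [Finset.sum_apply]
      split_ifs at hω with h'
      · exact absurd hω (by norm_num)
      · push_neg at h'
        exact le_of_lt h'
    have hmono := ENNReal.toReal_mono (measure_ne_top μ _) (measure_mono hsub)
    refine hmono.trans ?_
    have hint := hYindep.integrable_exp_mul_sum (t := -Δ) hYmeas
      (s := Finset.Ico 1 t) (fun i _ => hIntExpY i)
    have hch := measure_le_le_exp_mul_mgf (μ := μ) (X := ∑ s ∈ Finset.Ico 1 t, Y s)
      (t := -Δ) 0 (neg_nonpos.2 hΔ.le) hint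
    rw [mul_zero, Real.exp_zero, one_mul] at hch
    refine hch.trans ?_
    rw [hYindep.mgf_sum hYmeas]
    calc ∏ s ∈ Finset.Ico 1 t, mgf (Y s) μ (-Δ)
        ≤ ∏ s ∈ Finset.Ico 1 t, q :=
          Finset.prod_le_prod (fun i _ => mgf_nonneg) (fun i _ => hmgfY i)
      _ = q ^ (t-1) := by rw [Finset.prod_const, Nat.card_Ico]
  have hqpow : ∀ t : ℕ, 1 ≤ t → q ^ (t-1) = Real.exp (-((t:ℝ)-1) * Δ^2 / 2) := by
    intro t ht
    rw [hqdef, ← Real.exp_nat_mul]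
    congr 1
    rw [Nat.cast_sub ht]
    push_cast
    ring
  constructor
  · rcases Nat.lt_or_ge m 1 with hm | hm
    · have : m = 0 := by omega
      subst this
      simp only [show Finset.Icc 1 0 = (∅ : Finset ℕ) from rfl,
        show Finset.Icc 2 0 = (∅ : Finset ℕ) from rfl, Finset.sum_empty, mul_zero, add_zero]
      linarith
    · have hins : Finset.Icc 1 m = insert 1 (Finset.Icc 2 m) := by
        ext a; simp only [Finset.mem_Icc, Finset.mem_insert]; omega
      rw [hins, Finset.sum_insert (by simp)]
      have h1 : Δ * (μ {ω | x 1 ω = 2}).toReal ≤ Δ := by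
        have hp : (μ {ω | x 1 ω = 2}).toReal ≤ 1 := by
          have := ENNReal.toReal_mono ENNReal.one_ne_top (prob_le_one (μ := μ) (s := {ω | x 1 ω = 2}))
          simpa using this
        nlinarith
      have h2 : ∑ t ∈ Finset.Icc 2 m, Δ * (μ {ω | x t ω = 2}).toReal ≤
          Δ * ∑ t ∈ Finset.Icc 2 m, Real.exp (-((t:ℝ)-1) * Δ^2 / 2) := by
        rw [Finset.mul_sum]
        apply Finset.sum_le_sum
        intro t htm
        have ht2 : 2 ≤ t := (Finset.mem_Icc.mp htm).1
        exact mul_le_mul_of_nonneg_left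
          ((hchern t).trans_eq (hqpow t (by omega))) hΔ.le
      linarith
  · have hsum : ∑ t ∈ Finset.Icc 2 m, Real.exp (-((t:ℝ)-1) * Δ^2 / 2) =
        (∑ i ∈ Finset.range (m-1), q^i) * q := by
      rw [show ∑ t ∈ Finset.Icc 2 m, Real.exp (-((t:ℝ)-1) * Δ^2 / 2)
          = ∑ t ∈ Finset.Icc 2 m, q^(t-1) from Finset.sum_congr rfl fun t htm =>
          (hqpow t (le_trans one_le_two (Finset.mem_Icc.mp htm).1)).symm]
      rw [← Finset.Ico_add_one_right_eq_Icc, Finset.sum_Ico_eq_sum_range]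
      rw [show m + 1 - 2 = m - 1 from by omega]
      have hcg : ∀ i ∈ Finset.range (m-1), q ^ (2 + i - 1) = q^i * q := fun i _ => by
        rw [show 2 + i - 1 = i + 1 from by omega, pow_succ]
      rw [Finset.sum_congr rfl hcg, ← Finset.sum_mul]
    rw [hsum]
    have hgeom : ∑ i ∈ Finset.range (m-1), q^i ≤ (1-q)⁻¹ := by
      rw [geom_sum_eq (ne_of_lt hq1)]
      have h1q : (0:ℝ) < 1 - q := by linarith
      rw [div_le_iff_of_neg (by linarith : q - 1 < 0)]
      have he : (1-q)⁻¹ * (q-1) = -1 := by field_simp; ring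
      rw [he]
      have := pow_nonneg hq0.le (m-1)
      linarith
    set E := Real.exp (Δ^2/2) with hEdef
    have hEpos : (0:ℝ) < E := Real.exp_pos _
    have hE1 : Δ^2/2 + 1 ≤ E := Real.add_one_le_exp _
    have hE1pos : (0:ℝ) < E - 1 := by nlinarith
    have hqE : q = E⁻¹ := by rw [hqdef, hEdef, Real.exp_neg]
    have hkey : (1-q)⁻¹ * q = (E-1)⁻¹ := by
      rw [hqE, show (1 - E⁻¹) = (E-1)/E from by field_simp, inv_div]
      field_simp
    have hfin : Δ * ((1-q)⁻¹ * q) ≤ 2/Δ := by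
      rw [hkey, ← one_div, mul_one_div, div_le_div_iff₀ hE1pos hΔ]
      nlinarith
    have step : Δ * ((∑ i ∈ Finset.range (m-1), q^i) * q) ≤ Δ * ((1-q)⁻¹ * q) :=
      mul_le_mul_of_nonneg_left (mul_le_mul_of_nonneg_right hgeom hq0.le) hΔ.le
    linarith
end
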